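/- arXiv:2005.05161 — 2 statements merged into one kernel-verified Lean document; each statement's English description precedes it below -/
import Mathlib

section
/- Every graph automorphism of Γ₈ maps the vertex set {v₁, v₂} onto itself and maps the vertex set {a₃, b₃} onto itself. -/
/-- The vertices of the graph `Γ₈`. -/
inductive V8 : Type
  | v1 | v2 | a1 | a2 | a3 | b1 | b2 | b3
  deriving DecidableEq

open V8

/-- The graph `Γ₈`: the hexagonal cycle `a₁a₂a₃b₁b₂b₃a₁`, the chord `a₃b₃`,
and the four edges `a₁v₁`, `v₁b₁`, `a₂v₂`, `v₂b₂`. -/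
def Gamma8 : SimpleGraph V8 :=
  SimpleGraph.fromEdgeSet
    {s(a1, a2), s(a2, a3), s(a3, b1), s(b1, b2), s(b2, b3), s(b3, a1),
     s(a3, b3),
     s(a1, v1), s(v1, b1), s(a2, v2), s(v2, b2)}


def adjB : V8 → V8 → Bool
  | a1, a2 | a2, a3 | a3, b1 | b1, b2 | b2, b3 | b3, a1
  | a3, b3 | a1, v1 | v1, b1 | a2, v2 | v2, b2 => true
  | a2, a1 | a3, a2 | b1, a3 | b2, b1 | b3, b2 | a1, b3
  | b3, a3 | v1, a1 | b1, v1 | v2, a2 | b2, v2 => true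
  | _, _ => false

lemma adj_iff (u w : V8) : Gamma8.Adj u w ↔ adjB u w = true := by
  rw [Gamma8, SimpleGraph.fromEdgeSet_adj]
  cases u <;> cases w <;>
    simp only [Set.mem_insert_iff, Set.mem_singleton_iff, Sym2.eq_iff] <;> decide

instance : Fintype V8 := ⟨{v1, v2, a1, a2, a3, b1, b2, b3}, fun x => by cases x <;> simp⟩

instance : DecidableRel Gamma8.Adj := fun u w => decidable_of_iff _ (adj_iff u w).symm

lemma deg_eq (φ : Gamma8 ≃g Gamma8) (x : V8) : Gamma8.degree (φ x) = Gamma8.degree x := by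
  rw [← SimpleGraph.card_neighborFinset_eq_degree, ← SimpleGraph.card_neighborFinset_eq_degree,
    SimpleGraph.neighborFinset, SimpleGraph.neighborFinset, Set.toFinset_card, Set.toFinset_card]
  exact (Fintype.card_congr (φ.mapNeighborSet x)).symm

lemma deg2 (x : V8) (h : Gamma8.degree x = 2) : x = v1 ∨ x = v2 := by
  revert h; revert x; decide

lemma deg3 (x : V8) (h : Gamma8.degree x = 3) (h1 : ¬ Gamma8.Adj x v1)
    (h2 : ¬ Gamma8.Adj x v2) : x = a3 ∨ x = b3 := by
  revert h h1 h2; revert x; decide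

/-- Every graph automorphism of `Γ₈` maps the vertex set `{v₁, v₂}` onto itself and maps
the vertex set `{a₃, b₃}` onto itself. -/
theorem automorphism_of_Gamma8_preserves_pairs (φ : Gamma8 ≃g Gamma8) :
    ⇑φ '' ({v1, v2} : Set V8) = {v1, v2} ∧
    ⇑φ '' ({a3, b3} : Set V8) = {a3, b3} := by
  have hdv1 : Gamma8.degree v1 = 2 := by decide
  have hdv2 : Gamma8.degree v2 = 2 := by decide
  have hda3 : Gamma8.degree a3 = 3 := by decide
  have hdb3 : Gamma8.degree b3 = 3 := by decide
  have hv1 := deg2 _ ((deg_eq φ v1).trans hdv1)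
  have hv2 := deg2 _ ((deg_eq φ v2).trans hdv2)
  have hne : φ v1 ≠ φ v2 := fun h => by simpa using φ.toEquiv.injective h
  have hpair1 : ({φ v1, φ v2} : Set V8) = {v1, v2} := by
    rcases hv1 with h1 | h1 <;> rcases hv2 with h2 | h2 <;> simp_all [Set.pair_comm]
  have hadj : ∀ y : V8, (¬ Gamma8.Adj y v1 ∧ ¬ Gamma8.Adj y v2) →
      ¬ Gamma8.Adj (φ y) v1 ∧ ¬ Gamma8.Adj (φ y) v2 := by
    intro y ⟨n1, n2⟩
    have k1 : ¬ Gamma8.Adj (φ y) (φ v1) := fun h => n1 (φ.map_adj_iff.mp h)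
    have k2 : ¬ Gamma8.Adj (φ y) (φ v2) := fun h => n2 (φ.map_adj_iff.mp h)
    rcases hv1 with h1 | h1 <;> rcases hv2 with h2 | h2 <;> rw [h1] at k1 <;> rw [h2] at k2 <;>
      first
        | exact ⟨k1, k2⟩
        | exact ⟨k2, k1⟩
        | exact (hne (h1.trans h2.symm)).elim
  have ha3 := deg3 _ ((deg_eq φ a3).trans hda3)
  have hb3 := deg3 _ ((deg_eq φ b3).trans hdb3)
  obtain ⟨p1, p2⟩ := hadj a3 ⟨by decide, by decide⟩
  obtain ⟨q1, q2⟩ := hadj b3 ⟨by decide, by decide⟩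
  have ha3' := ha3 p1 p2
  have hb3' := hb3 q1 q2
  have hne2 : φ a3 ≠ φ b3 := fun h => by simpa using φ.toEquiv.injective h
  have hpair2 : ({φ a3, φ b3} : Set V8) = {a3, b3} := by
    rcases ha3' with h1 | h1 <;> rcases hb3' with h2 | h2 <;> simp_all [Set.pair_comm]
  constructor
  · rw [Set.image_pair]; exact hpair1
  · rw [Set.image_pair]; exact hpair2
end

section
/- Every graph automorphism of Γ₈ maps the edge set of the hexagonal cycle K = a₁a₂a₃b₁b₂b₃a₁ (namely {a₁a₂, a₂a₃, a₃b₁, b₁b₂, b₂b₃, b₃a₁}) onto itself. -/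
open V8

instance inst_s7 : Fintype V8 :=
  ⟨⟨[v1, v2, a1, a2, a3, b1, b2, b3], by decide⟩, by intro x; cases x <;> decide⟩

/-- The edge set of the hexagonal cycle `K = a₁a₂a₃b₁b₂b₃a₁` in `Γ₈`. -/
def hexEdges8 : Set (Sym2 V8) :=
  {s(a1, a2), s(a2, a3), s(a3, b1), s(b1, b2), s(b2, b3), s(b3, a1)}

instance inst_s7_2 : DecidableRel Gamma8.Adj := fun a b =>
  decidable_of_iff
    ((s(a, b) = s(a1, a2) ∨ s(a, b) = s(a2, a3) ∨ s(a, b) = s(a3, b1) ∨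
      s(a, b) = s(b1, b2) ∨ s(a, b) = s(b2, b3) ∨ s(a, b) = s(b3, a1) ∨
      s(a, b) = s(a3, b3) ∨ s(a, b) = s(a1, v1) ∨ s(a, b) = s(v1, b1) ∨
      s(a, b) = s(a2, v2) ∨ s(a, b) = s(v2, b2)) ∧ a ≠ b)
    (by rw [Gamma8, SimpleGraph.fromEdgeSet_adj]
        simp only [Set.mem_insert_iff, Set.mem_singleton_iff])

/-- `x` has at most two neighbours in `Γ₈`. -/
def Dlow (x : V8) : Prop :=
  ∀ y z w : V8, Gamma8.Adj x y → Gamma8.Adj x z → Gamma8.Adj x w →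
    (y = z ∨ y = w ∨ z = w)

instance (x : V8) : Decidable (Dlow x) := by unfold Dlow; infer_instance

lemma Dlow_map (φ : Gamma8 ≃g Gamma8) (x : V8) (h : Dlow x) : Dlow (φ x) := by
  intro y z w hy hz hw
  have hy' : Gamma8.Adj x (φ.symm y) := by
    have := φ.symm.map_adj_iff.mpr hy
    simpa using this
  have hz' : Gamma8.Adj x (φ.symm z) := by
    have := φ.symm.map_adj_iff.mpr hz
    simpa using this
  have hw' : Gamma8.Adj x (φ.symm w) := by
    have := φ.symm.map_adj_iff.mpr hw
    simpa using this
  rcases h _ _ _ hy' hz' hw' with h' | h' | h'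
  · exact Or.inl (φ.symm.toEquiv.injective h')
  · exact Or.inr (Or.inl (φ.symm.toEquiv.injective h'))
  · exact Or.inr (Or.inr (φ.symm.toEquiv.injective h'))

/-- `x` has three neighbours and none of its neighbours has only two. -/
def Qin (x : V8) : Prop :=
  ¬ Dlow x ∧ ∀ y : V8, Gamma8.Adj x y → ¬ Dlow y

instance (x : V8) : Decidable (Qin x) := by unfold Qin; infer_instance

lemma Qin_map (φ : Gamma8 ≃g Gamma8) (x : V8) (h : Qin x) : Qin (φ x) := by
  refine ⟨fun hD => h.1 ?_, fun y hy hD => ?_⟩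
  · have := Dlow_map φ.symm _ hD
    simpa using this
  · have hy' : Gamma8.Adj x (φ.symm y) := by
      have := φ.symm.map_adj_iff.mpr hy
      simpa using this
    exact h.2 _ hy' (by simpa using Dlow_map φ.symm _ hD)

lemma Qin_iff : ∀ x : V8, Qin x ↔ (x = a3 ∨ x = b3) := by decide

lemma hex_mem_iff (s : Sym2 V8) :
    s ∈ hexEdges8 ↔ (s = s(a1, a2) ∨ s = s(a2, a3) ∨ s = s(a3, b1) ∨
      s = s(b1, b2) ∨ s = s(b2, b3) ∨ s = s(b3, a1)) := by
  simp [hexEdges8]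

lemma key : ∀ u w : V8, Gamma8.Adj u w → ¬ Dlow u → ¬ Dlow w →
    ¬ ((u = a3 ∧ w = b3) ∨ (u = b3 ∧ w = a3)) →
    (s(u, w) = s(a1, a2) ∨ s(u, w) = s(a2, a3) ∨ s(u, w) = s(a3, b1) ∨
      s(u, w) = s(b1, b2) ∨ s(u, w) = s(b2, b3) ∨ s(u, w) = s(b3, a1)) := by
  decide

lemma hex_props : ∀ u w : V8,
    (s(u, w) = s(a1, a2) ∨ s(u, w) = s(a2, a3) ∨ s(u, w) = s(a3, b1) ∨
      s(u, w) = s(b1, b2) ∨ s(u, w) = s(b2, b3) ∨ s(u, w) = s(b3, a1)) →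
    Gamma8.Adj u w ∧ ¬ Dlow u ∧ ¬ Dlow w ∧
      ¬ ((u = a3 ∧ w = b3) ∨ (u = b3 ∧ w = a3)) := by
  decide

/-- Every graph automorphism of `Γ₈` maps the edge set of the hexagonal cycle
`K = a₁a₂a₃b₁b₂b₃a₁` onto itself: `{φ(u), φ(w)} ∈ K` for every edge `{u, w}` of `K`. -/
theorem automorphism_of_Gamma8_preserves_hexagon (φ : Gamma8 ≃g Gamma8) :
    ∀ u w : V8, s(u, w) ∈ hexEdges8 → s(φ u, φ w) ∈ hexEdges8 := by
  intro u w hmem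
  rw [hex_mem_iff] at hmem
  obtain ⟨hadj, hDu, hDw, hne⟩ := hex_props u w hmem
  rw [hex_mem_iff]
  refine key (φ u) (φ w) (φ.map_adj_iff.mpr hadj) ?_ ?_ ?_
  · intro hD
    exact hDu (by simpa using Dlow_map φ.symm _ hD)
  · intro hD
    exact hDw (by simpa using Dlow_map φ.symm _ hD)
  · rintro (⟨h1, h2⟩ | ⟨h1, h2⟩)
    · have hu : u = φ.symm a3 := by rw [← h1]; simp
      have hw : w = φ.symm b3 := by rw [← h2]; simp
      have q3 : Qin (φ.symm a3) := Qin_map φ.symm a3 ((Qin_iff a3).mpr (Or.inl rfl))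
      have q4 : Qin (φ.symm b3) := Qin_map φ.symm b3 ((Qin_iff b3).mpr (Or.inr rfl))
      rw [Qin_iff] at q3 q4
      rcases q3 with h3 | h3 <;> rcases q4 with h4 | h4
      · exact absurd (φ.symm.toEquiv.injective (h3.trans h4.symm)) (by decide)
      · exact hne (Or.inl ⟨hu.trans h3, hw.trans h4⟩)
      · exact hne (Or.inr ⟨hu.trans h3, hw.trans h4⟩)
      · exact absurd (φ.symm.toEquiv.injective (h3.trans h4.symm)) (by decide)
    · have hu : u = φ.symm b3 := by rw [← h1]; simp
      have hw : w = φ.symm a3 := by rw [← h2]; simp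
      have q3 : Qin (φ.symm a3) := Qin_map φ.symm a3 ((Qin_iff a3).mpr (Or.inl rfl))
      have q4 : Qin (φ.symm b3) := Qin_map φ.symm b3 ((Qin_iff b3).mpr (Or.inr rfl))
      rw [Qin_iff] at q3 q4
      rcases q3 with h3 | h3 <;> rcases q4 with h4 | h4
      · exact absurd (φ.symm.toEquiv.injective (h3.trans h4.symm)) (by decide)
      · exact hne (Or.inr ⟨hu.trans h4, hw.trans h3⟩)
      · exact hne (Or.inl ⟨hu.trans h4, hw.trans h3⟩)
      · exact absurd (φ.symm.toEquiv.injective (h3.trans h4.symm)) (by decide)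
end
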